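/- For any nonnegative integers α and n, letting G be geometric on {0,1,2,...} with parameter 1-q and B_n a Binomial(n,p) random variable independent of G, the ratio Pr(G+B_{n+1}=α)/Pr(G+B_n=α) is at most (p+q(1-p))/q. -/

import Mathlib

open Finset

/-- pmf of a geometric distribution on {0,1,2,...} with success parameter `1-q`. -/
noncomputable def geomPMF (q : ℝ) (k : ℕ) : ℝ := q ^ k * (1 - q)

/-- pmf of a Bernoulli distribution with parameter `p`. -/
noncomputable def bernPMF (p : ℝ) (k : ℕ) : ℝ :=
  if k = 0 then 1 - p else if k = 1 then p else 0

/-- pmf of a Binomial(n, p) distribution. -/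
noncomputable def binomPMF (n : ℕ) (p : ℝ) (k : ℕ) : ℝ :=
  (n.choose k : ℝ) * p ^ k * (1 - p) ^ (n - k)

/-- pmf of the sum of two independent random variables with pmfs `f` and `g`. -/
noncomputable def convPMF (f g : ℕ → ℝ) (α : ℕ) : ℝ :=
  ∑ k ∈ Finset.range (α + 1), f k * g (α - k)

/-- Pascal-type recursion for the binomial pmf. -/
lemma binom_succ_eq (n k : ℕ) (p : ℝ) :
    binomPMF (n + 1) p (k + 1) = (1 - p) * binomPMF n p (k + 1) + p * binomPMF n p k := by
  unfold binomPMF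
  rcases lt_or_ge k n with h | h
  · -- k + 1 ≤ n
    have h1 : n + 1 - (k + 1) = (n - (k + 1)) + 1 := by omega
    have h2 : n - k = (n - (k + 1)) + 1 := by omega
    rw [Nat.choose_succ_succ, h1, h2]
    push_cast
    ring
  · rcases eq_or_lt_of_le h with h' | h'
    · subst h'
      simp [Nat.choose_succ_self, Nat.sub_self, pow_succ]
      ring
    · -- k > n : all terms vanish
      have c1 : (n + 1).choose (k + 1) = 0 := Nat.choose_eq_zero_of_lt (by omega)
      have c2 : n.choose (k + 1) = 0 := Nat.choose_eq_zero_of_lt (by omega)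
      have c3 : n.choose k = 0 := Nat.choose_eq_zero_of_lt h'
      simp [c1, c2, c3]

theorem geom_binom_succ_ratio_upper (p q : ℝ) (hp0 : 0 < p) (hp1 : p < 1)
    (hq0 : 0 < q) (hq1 : q < 1) (α n : ℕ) :
    convPMF (geomPMF q) (binomPMF (n + 1) p) α / convPMF (geomPMF q) (binomPMF n p) α
      ≤ (p + q * (1 - p)) / q := by
  have hp' : (0:ℝ) < 1 - p := by linarith
  have hq' : (0:ℝ) < 1 - q := by linarith
  have hbnn : ∀ m k, 0 ≤ binomPMF m p k := fun m k =>
    mul_nonneg (mul_nonneg (Nat.cast_nonneg _) (pow_nonneg hp0.le _)) (pow_nonneg hp'.le _)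
  have hgnn : ∀ k, 0 ≤ geomPMF q k := fun k =>
    mul_nonneg (pow_nonneg hq0.le _) hq'.le
  set T : ℝ := ∑ k ∈ Finset.range α, geomPMF q k * binomPMF n p (α - 1 - k) with hT
  set S : ℝ := convPMF (geomPMF q) (binomPMF n p) α with hS
  -- Step 1 : L = (1-p) S + p T
  have hLeq : convPMF (geomPMF q) (binomPMF (n + 1) p) α = (1 - p) * S + p * T := by
    have expand : ∀ k ∈ Finset.range (α + 1),
        geomPMF q k * binomPMF (n + 1) p (α - k)
          = (1 - p) * (geomPMF q k * binomPMF n p (α - k))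
            + (if k < α then p * (geomPMF q k * binomPMF n p (α - 1 - k)) else 0) := by
      intro k hk
      simp only [mem_range] at hk
      rcases lt_or_ge k α with h | h
      · have h1 : α - k = (α - 1 - k) + 1 := by omega
        rw [if_pos h, h1, binom_succ_eq]
        ring
      · have hk' : k = α := by omega
        subst hk'
        rw [if_neg (lt_irrefl k), Nat.sub_self]
        unfold binomPMF
        simp [pow_succ]
        ring
    rw [convPMF, Finset.sum_congr rfl expand, Finset.sum_add_distrib]
    have e1 : ∑ k ∈ Finset.range (α + 1),
        (1 - p) * (geomPMF q k * binomPMF n p (α - k)) = (1 - p) * S := by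
      rw [hS, convPMF, Finset.mul_sum]
    have e2 : ∑ k ∈ Finset.range (α + 1),
        (if k < α then p * (geomPMF q k * binomPMF n p (α - 1 - k)) else 0) = p * T := by
      rw [Finset.sum_range_succ, if_neg (lt_irrefl α), add_zero, hT, Finset.mul_sum]
      exact Finset.sum_congr rfl fun k hk => by
        rw [if_pos (mem_range.mp hk)]
    rw [e1, e2]
  -- Step 2 : q * T ≤ S
  have hTS : q * T ≤ S := by
    have hqT : q * T = ∑ k ∈ Finset.range α,
        geomPMF q (k + 1) * binomPMF n p (α - (k + 1)) := by
      rw [hT, Finset.mul_sum]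
      refine Finset.sum_congr rfl fun k hk => ?_
      have h1 : α - 1 - k = α - (k + 1) := by omega
      unfold geomPMF
      rw [h1, pow_succ]
      ring
    have hS' : S = (∑ k ∈ Finset.range α,
        geomPMF q (k + 1) * binomPMF n p (α - (k + 1))) + geomPMF q 0 * binomPMF n p α := by
      rw [hS, convPMF, Finset.sum_range_succ']
      simp
    have hnn : 0 ≤ geomPMF q 0 * binomPMF n p α := mul_nonneg (hgnn 0) (hbnn n α)
    rw [hqT, hS']
    linarith
  -- Step 3 : S > 0
  have hSpos : 0 < S := by
    have hle : geomPMF q α * binomPMF n p (α - α) ≤ S := by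
      rw [hS, convPMF]
      exact Finset.single_le_sum (fun k _ => mul_nonneg (hgnn k) (hbnn n _))
        (mem_range.mpr (Nat.lt_succ_self α))
    have hpos : 0 < geomPMF q α * binomPMF n p (α - α) := by
      rw [Nat.sub_self]
      unfold geomPMF binomPMF
      simp
      positivity
    linarith
  -- Conclusion
  rw [div_le_div_iff₀ hSpos hq0]
  have hpT : p * T ≤ (p / q) * S := by
    have : (p / q) * (q * T) ≤ (p / q) * S :=
      mul_le_mul_of_nonneg_left hTS (div_nonneg hp0.le hq0.le)
    calc p * T = (p / q) * (q * T) := by field_simp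
      _ ≤ (p / q) * S := this
  have : convPMF (geomPMF q) (binomPMF (n + 1) p) α ≤ ((1 - p) + p / q) * S := by
    rw [hLeq]; nlinarith
  calc convPMF (geomPMF q) (binomPMF (n + 1) p) α * q ≤ (((1 - p) + p / q) * S) * q := by
        nlinarith
    _ = (p + q * (1 - p)) * S := by
        have h : (1 - p + p / q) * q = p + q * (1 - p) := by
          field_simp
          ring
        calc (1 - p + p / q) * S * q = ((1 - p + p / q) * q) * S := by ring
          _ = (p + q * (1 - p)) * S := by rw [h]
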